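/- arXiv:1306.2927 — 12 statements merged into one kernel-verified Lean document; each statement's English description precedes it below -/
import Mathlib

section
/- Let n ≥ 1, let P be an invertible n×n complex matrix, let λ_1,…,λ_n be nonzero complex numbers, let Λ = diag(λ_1,…,λ_n), let M = PΛP^{−1}, and let n_1,…,n_n be integers. Set T = Σ_{a,b=1}^{n} E_{ab} ⊗ M^{n_a−n_b}, T₁₂ = T ⊗ I_n and T₂₃ = I_n ⊗ T. Then T₁₂·T₂₃·T₁₂ = n·T₁₂ holds if and only if for all i, j, u ∈ {1,…,n}: (Σ_{r=1}^{n} (λ_j/λ_i)^{n_r}) · (Σ_{k,l=1}^{n} (P^{−1})_{ik} P_{lj} λ_u^{n_k−n_l}) = n·δ_{ij}. -/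
open Matrix Kronecker

lemma conj_pow_nat {n : ℕ} (P D : Matrix (Fin n) (Fin n) ℂ) (hP : IsUnit P.det) :
    ∀ k : ℕ, (P * D * P⁻¹) ^ k = P * D ^ k * P⁻¹ := by
  intro k
  induction k with
  | zero => simp [Matrix.mul_nonsing_inv P hP]
  | succ k ih =>
      rw [pow_succ, ih, pow_succ]
      have h1 : P⁻¹ * (P * D * P⁻¹) = D * P⁻¹ := by
        rw [← Matrix.mul_assoc, ← Matrix.mul_assoc, Matrix.nonsing_inv_mul P hP, Matrix.one_mul]
      calc P * D ^ k * P⁻¹ * (P * D * P⁻¹) = P * D ^ k * (P⁻¹ * (P * D * P⁻¹)) := by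
            rw [Matrix.mul_assoc]
        _ = P * (D ^ k * D) * P⁻¹ := by rw [h1, Matrix.mul_assoc, Matrix.mul_assoc, Matrix.mul_assoc]

lemma my_conj_zpow {n : ℕ} (P : Matrix (Fin n) (Fin n) ℂ) (lam : Fin n → ℂ)
    (hP : IsUnit P.det) (hlam : ∀ i, lam i ≠ 0) :
    ∀ m : ℤ, (P * Matrix.diagonal lam * P⁻¹) ^ m
      = P * Matrix.diagonal (fun i => lam i ^ m) * P⁻¹ := by
  intro m
  cases m with
  | ofNat k =>
      have h2 : (fun i => lam i ^ ((k : ℕ) : ℤ)) = lam ^ k := by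
        funext i; simp
      rw [Int.ofNat_eq_coe, h2, zpow_natCast, conj_pow_nat P _ hP, Matrix.diagonal_pow]
  | negSucc k =>
      have h3 : (Matrix.diagonal (lam ^ (k+1)))⁻¹
          = Matrix.diagonal (fun i => lam i ^ (Int.negSucc k)) := by
        apply Matrix.inv_eq_right_inv
        rw [Matrix.diagonal_mul_diagonal]
        have h4 : (fun i => (lam ^ (k+1)) i * lam i ^ (Int.negSucc k)) = (1 : Fin n → ℂ) := by
          funext i
          simp only [Pi.mul_apply, Pi.pow_apply, Pi.one_apply, zpow_negSucc]
          exact mul_inv_cancel₀ (pow_ne_zero _ (hlam i))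
        rw [h4]; exact Matrix.diagonal_one
      rw [zpow_negSucc, conj_pow_nat P _ hP, Matrix.diagonal_pow,
        Matrix.mul_inv_rev, Matrix.mul_inv_rev, Matrix.nonsing_inv_nonsing_inv P hP,
        h3, Matrix.mul_assoc]


lemma sum6 {α : Type*} [Fintype α] (f : α → α → α → α → α → α → ℂ) :
    (∑ a1 : α, ∑ a2 : α, ∑ a3 : α, ∑ a4 : α, ∑ a5 : α, ∑ a6 : α, f a1 a2 a3 a4 a5 a6)
      = ∑ b1 : α, ∑ b2 : α, ∑ b3 : α, ∑ b4 : α, ∑ b5 : α, ∑ b6 : α, f b6 b5 b4 b2 b3 b1 := by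
  have h1 : (∑ p : α × α × α × α × α × α,
      f p.1 p.2.1 p.2.2.1 p.2.2.2.1 p.2.2.2.2.1 p.2.2.2.2.2)
      = ∑ a1 : α, ∑ a2 : α, ∑ a3 : α, ∑ a4 : α, ∑ a5 : α, ∑ a6 : α, f a1 a2 a3 a4 a5 a6 := by
    simp only [Fintype.sum_prod_type]
  have h2 : (∑ p : α × α × α × α × α × α,
      f p.2.2.2.2.2 p.2.2.2.2.1 p.2.2.2.1 p.2.1 p.2.2.1 p.1)
      = ∑ b1 : α, ∑ b2 : α, ∑ b3 : α, ∑ b4 : α, ∑ b5 : α, ∑ b6 : α, f b6 b5 b4 b2 b3 b1 := by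
    simp only [Fintype.sum_prod_type]
  rw [← h1, ← h2]
  exact (Fintype.sum_equiv
    ⟨fun p => (p.2.2.2.2.2, p.2.2.2.2.1, p.2.2.2.1, p.2.1, p.2.2.1, p.1),
     fun p => (p.2.2.2.2.2, p.2.2.2.1, p.2.2.2.2.1, p.2.2.1, p.2.1, p.1),
     fun ⟨a,b,c,d,e,g⟩ => rfl, fun ⟨a,b,c,d,e,g⟩ => rfl⟩
    _ _ (fun ⟨a,b,c,d,e,g⟩ => rfl)).symm
lemma sum7 {α : Type*} [Fintype α] (f : α → α → α → α → α → α → α → ℂ) :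
    (∑ a1 : α, ∑ a2 : α, ∑ a3 : α, ∑ a4 : α, ∑ a5 : α, ∑ a6 : α, ∑ a7 : α,
        f a1 a2 a3 a4 a5 a6 a7)
      = ∑ b1 : α, ∑ b2 : α, ∑ b3 : α, ∑ b4 : α, ∑ b5 : α, ∑ b6 : α, ∑ b7 : α,
        f b5 b6 b7 b4 b3 b2 b1 := by
  have h1 : (∑ p : α × α × α × α × α × α × α,
      f p.1 p.2.1 p.2.2.1 p.2.2.2.1 p.2.2.2.2.1 p.2.2.2.2.2.1 p.2.2.2.2.2.2)
      = ∑ a1 : α, ∑ a2 : α, ∑ a3 : α, ∑ a4 : α, ∑ a5 : α, ∑ a6 : α, ∑ a7 : α,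
        f a1 a2 a3 a4 a5 a6 a7 := by
    simp only [Fintype.sum_prod_type]
  have h2 : (∑ p : α × α × α × α × α × α × α,
      f p.2.2.2.2.1 p.2.2.2.2.2.1 p.2.2.2.2.2.2 p.2.2.2.1 p.2.2.1 p.2.1 p.1)
      = ∑ b1 : α, ∑ b2 : α, ∑ b3 : α, ∑ b4 : α, ∑ b5 : α, ∑ b6 : α, ∑ b7 : α,
        f b5 b6 b7 b4 b3 b2 b1 := by
    simp only [Fintype.sum_prod_type]
  rw [← h1, ← h2]
  exact (Fintype.sum_equiv
    ⟨fun p => (p.2.2.2.2.1, p.2.2.2.2.2.1, p.2.2.2.2.2.2, p.2.2.2.1, p.2.2.1, p.2.1, p.1),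
     fun p => (p.2.2.2.2.2.2, p.2.2.2.2.2.1, p.2.2.2.2.1, p.2.2.2.1, p.1, p.2.1, p.2.2.1),
     fun ⟨a,b,c,d,e,g,h⟩ => rfl, fun ⟨a,b,c,d,e,g,h⟩ => rfl⟩
    _ _ (fun ⟨a,b,c,d,e,g,h⟩ => rfl)).symm


/-- the master equation. With `M = P Λ P⁻¹`, `Λ = diag(λ)`,
`T = Σ_{a,b} E_{ab} ⊗ M^(n_a - n_b)`, `T₁₂ = T ⊗ I`, `T₂₃ = I ⊗ T`, the
Temperley–Lieb condition `T₁₂ T₂₃ T₁₂ = n T₁₂` holds iff for all `i, j, u`: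
`(Σ_r (λ_j/λ_i)^(n_r)) (Σ_{k,l} (P⁻¹)_{ik} P_{lj} λ_u^(n_k - n_l)) = n δ_{ij}`. -/
theorem master_equation (n : ℕ) (hn : 1 ≤ n)
    (P : Matrix (Fin n) (Fin n) ℂ) (hP : IsUnit P)
    (lam : Fin n → ℂ) (hlam : ∀ i, lam i ≠ 0)
    (e : Fin n → ℤ)
    (M : Matrix (Fin n) (Fin n) ℂ)
    (hM : M = P * Matrix.diagonal lam * P⁻¹)
    (T : Matrix (Fin n × Fin n) (Fin n × Fin n) ℂ)
    (hT : T = ∑ a : Fin n, ∑ b : Fin n,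
      (Matrix.single a b (1 : ℂ)) ⊗ₖ (M ^ (e a - e b)))
    (T12 : Matrix (Fin n × Fin n × Fin n) (Fin n × Fin n × Fin n) ℂ)
    (hT12 : T12 = Matrix.reindex (Equiv.prodAssoc (Fin n) (Fin n) (Fin n))
      (Equiv.prodAssoc (Fin n) (Fin n) (Fin n))
      (T ⊗ₖ (1 : Matrix (Fin n) (Fin n) ℂ)))
    (T23 : Matrix (Fin n × Fin n × Fin n) (Fin n × Fin n × Fin n) ℂ)
    (hT23 : T23 = (1 : Matrix (Fin n) (Fin n) ℂ) ⊗ₖ T) :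
    T12 * T23 * T12 = (n : ℂ) • T12 ↔
      ∀ i j u : Fin n,
        (∑ r : Fin n, (lam j / lam i) ^ (e r)) *
          (∑ k : Fin n, ∑ l : Fin n, P⁻¹ i k * P l j * lam u ^ (e k - e l)) =
          if i = j then (n : ℂ) else 0 := by
  have hTe : ∀ p q r s : Fin n, T (p, q) (r, s) = (M ^ (e p - e r)) q s := by
    intro p q r s
    rw [hT]
    simp only [Matrix.sum_apply, Matrix.kroneckerMap_apply, Matrix.single,
      Matrix.of_apply, ite_mul, one_mul, zero_mul]
    rw [Finset.sum_comm]
    simp only [ite_and]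
    rw [Finset.sum_comm]
    simp
  have hT12e : ∀ a x c b y z : Fin n,
      T12 (a, x, c) (b, y, z) = T (a, x) (b, y) * (if c = z then 1 else 0) := by
    intro a x c b y z
    rw [hT12]
    simp [Matrix.one_apply]
  have hT23e : ∀ a x c b y z : Fin n,
      T23 (a, x, c) (b, y, z) = (if a = b then 1 else 0) * T (x, c) (y, z) := by
    intro a x c b y z
    rw [hT23]
    simp [Matrix.one_apply]
  have hprod : ∀ a x c b y z : Fin n,
      (T12 * T23 * T12) (a, x, c) (b, y, z)
        = ∑ s : Fin n, ∑ t : Fin n, ∑ q : Fin n,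
            T (a, x) (s, q) * T (q, c) (t, z) * T (s, t) (b, y) := by
    intro a x c b y z
    simp only [Matrix.mul_apply, Fintype.sum_prod_type, hT12e, hT23e]
    simp only [mul_ite, ite_mul, mul_zero, zero_mul, mul_one, one_mul,
      Finset.sum_ite_eq, Finset.sum_ite_eq', Finset.mem_univ, if_true,
      Finset.sum_ite_irrel, Finset.sum_const_zero,
      Finset.sum_mul, Finset.mul_sum]
  have hPd : IsUnit P.det := (Matrix.isUnit_iff_isUnit_det P).mp hP
  have hMe : ∀ (m : ℤ) (q r : Fin n), (M ^ m) q r = ∑ i, P q i * lam i ^ m * P⁻¹ i r := by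
    intro m q r
    rw [hM, my_conj_zpow P lam hPd hlam m, Matrix.mul_apply]
    refine Finset.sum_congr rfl fun i _ => ?_
    rw [Matrix.mul_diagonal]
  have hL : ∀ a x c b y z : Fin n,
      (T12 * T23 * T12) (a, x, c) (b, y, z) =
        ∑ i : Fin n, ∑ j : Fin n, ∑ u : Fin n,
          (P x i * lam i ^ e a) * (P⁻¹ j y * lam j ^ (-e b)) * (P c u * P⁻¹ u z) *
          ((∑ r : Fin n, lam j ^ e r * lam i ^ (-e r)) *
           (∑ k : Fin n, ∑ l : Fin n, P⁻¹ i k * P l j * lam u ^ (e k - e l))) := by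
    intro a x c b y z
    rw [hprod a x c b y z]
    simp only [hTe, hMe]
    simp only [Finset.sum_mul_sum, Finset.mul_sum, Finset.sum_mul]
    rw [sum6]
    refine Finset.sum_congr rfl fun i _ => Finset.sum_congr rfl fun j _ => ?_
    refine Finset.sum_congr rfl fun u _ => Finset.sum_congr rfl fun s _ => ?_
    refine Finset.sum_congr rfl fun q _ => Finset.sum_congr rfl fun t _ => ?_
    rw [sub_eq_add_neg (e a) (e t), zpow_add₀ (hlam i),
      sub_eq_add_neg (e t) (e b), zpow_add₀ (hlam j)]
    ring
  have pairA : ∀ i i' : Fin n, (∑ x : Fin n, P⁻¹ i x * P x i') = if i = i' then 1 else 0 := by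
    intro i i'
    rw [← Matrix.mul_apply, Matrix.nonsing_inv_mul P hPd, Matrix.one_apply]
  have pairB : ∀ c z : Fin n, (∑ u : Fin n, P c u * P⁻¹ u z) = if c = z then 1 else 0 := by
    intro c z
    rw [← Matrix.mul_apply, Matrix.mul_nonsing_inv P hPd, Matrix.one_apply]
  have hR : ∀ a x c b y z : Fin n,
      (((n : ℂ) • T12)) (a, x, c) (b, y, z) =
        ∑ i : Fin n, ∑ j : Fin n, ∑ u : Fin n,
          (P x i * lam i ^ e a) * (P⁻¹ j y * lam j ^ (-e b)) * (P c u * P⁻¹ u z) *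
          (if i = j then (n : ℂ) else 0) := by
    intro a x c b y z
    rw [Matrix.smul_apply, hT12e a x c b y z, hTe, hMe, ← pairB c z]
    simp only [mul_ite, ite_mul, mul_zero, zero_mul, Finset.sum_ite_eq, Finset.mem_univ,
      if_true, smul_eq_mul, Finset.sum_mul_sum, Finset.mul_sum, Finset.sum_mul,
      Finset.sum_ite_irrel, Finset.sum_const_zero]
    rw [Finset.sum_comm]
    refine Finset.sum_congr rfl fun i _ => Finset.sum_congr rfl fun u _ => ?_
    rw [sub_eq_add_neg (e a) (e b), zpow_add₀ (hlam i)]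
    ring
  have step : ∀ (H : Fin n → Fin n → Fin n → ℂ) (i j v a b : Fin n),
      (∑ x : Fin n, ∑ c : Fin n, ∑ y : Fin n, ∑ z : Fin n,
        (P⁻¹ i x * P⁻¹ v c * P y j * P z v) *
          (∑ i' : Fin n, ∑ j' : Fin n, ∑ u' : Fin n,
            (P x i' * lam i' ^ e a) * (P⁻¹ j' y * lam j' ^ (-e b)) * (P c u' * P⁻¹ u' z) *
              H i' j' u'))
      = lam i ^ e a * lam j ^ (-e b) * H i j v := by
    intro H i j v a b
    have step1 : (∑ i' : Fin n, ∑ j' : Fin n, ∑ u' : Fin n,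
        (lam i' ^ e a * lam j' ^ (-e b) * H i' j' u') *
          ((∑ x : Fin n, P⁻¹ i x * P x i') * (∑ c : Fin n, P⁻¹ v c * P c u') *
           (∑ y : Fin n, P⁻¹ j' y * P y j) * (∑ z : Fin n, P⁻¹ u' z * P z v)))
        = (∑ x : Fin n, ∑ c : Fin n, ∑ y : Fin n, ∑ z : Fin n,
        (P⁻¹ i x * P⁻¹ v c * P y j * P z v) *
          (∑ i' : Fin n, ∑ j' : Fin n, ∑ u' : Fin n,
            (P x i' * lam i' ^ e a) * (P⁻¹ j' y * lam j' ^ (-e b)) * (P c u' * P⁻¹ u' z) *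
              H i' j' u')) := by
      simp only [Finset.sum_mul_sum, Finset.mul_sum, Finset.sum_mul]
      rw [sum7]
      refine Finset.sum_congr rfl fun b1 _ => Finset.sum_congr rfl fun b2 _ => ?_
      refine Finset.sum_congr rfl fun b3 _ => Finset.sum_congr rfl fun b4 _ => ?_
      refine Finset.sum_congr rfl fun b5 _ => Finset.sum_congr rfl fun b6 _ => ?_
      refine Finset.sum_congr rfl fun b7 _ => ?_
      ring
    rw [← step1]
    simp only [pairA, mul_ite, ite_mul, mul_zero, zero_mul, mul_one, one_mul,
      Finset.sum_ite_eq, Finset.sum_ite_eq', Finset.sum_ite_irrel, Finset.sum_const_zero,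
      Finset.mem_univ, if_true]
  have hdiv : ∀ i j : Fin n, (∑ r : Fin n, (lam j / lam i) ^ e r)
      = ∑ r : Fin n, lam j ^ e r * lam i ^ (-e r) := by
    intro i j
    refine Finset.sum_congr rfl fun r _ => ?_
    rw [div_zpow, div_eq_mul_inv, ← _root_.zpow_neg]
  have goal : T12 * T23 * T12 = (n : ℂ) • T12 ↔
      ∀ i j u : Fin n,
        (∑ r : Fin n, (lam j / lam i) ^ (e r)) *
          (∑ k : Fin n, ∑ l : Fin n, P⁻¹ i k * P l j * lam u ^ (e k - e l)) =
          if i = j then (n : ℂ) else 0 := by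
    constructor
    · intro heq i j u
      have hent : ∀ a x c b y z : Fin n, (T12 * T23 * T12) (a, x, c) (b, y, z)
          = (((n : ℂ) • T12)) (a, x, c) (b, y, z) := by
        intro a x c b y z; rw [heq]
      set a0 : Fin n := ⟨0, hn⟩ with ha0
      have e1 := step (fun i j u => (∑ r : Fin n, lam j ^ e r * lam i ^ (-e r)) *
          (∑ k : Fin n, ∑ l : Fin n, P⁻¹ i k * P l j * lam u ^ (e k - e l))) i j u a0 a0
      have e2 := step (fun i j u => if i = j then (n : ℂ) else 0) i j u a0 a0
      rw [hdiv i j]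
      have hc : lam i ^ e a0 * lam j ^ (-e a0) ≠ 0 :=
        mul_ne_zero (zpow_ne_zero _ (hlam i)) (zpow_ne_zero _ (hlam j))
      apply mul_left_cancel₀ hc
      rw [← e1, ← e2]
      refine Finset.sum_congr rfl fun x _ => Finset.sum_congr rfl fun c _ => ?_
      refine Finset.sum_congr rfl fun y _ => Finset.sum_congr rfl fun z _ => ?_
      rw [← hL a0 x c a0 y z, ← hR a0 x c a0 y z, hent]
    · intro h
      ext ⟨a, x, c⟩ ⟨b, y, z⟩
      rw [hL a x c b y z, hR a x c b y z]
      refine Finset.sum_congr rfl fun i _ => Finset.sum_congr rfl fun j _ => ?_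
      refine Finset.sum_congr rfl fun u _ => ?_
      have := h i j u
      rw [hdiv] at this
      rw [this]
  exact goal
end

section
/- Let n ≥ 1, let P be an invertible n×n complex matrix, let λ_1,…,λ_n be nonzero complex numbers and n_1,…,n_n be integers, and suppose the master equation holds: for all i, j, u ∈ {1,…,n}, (Σ_{r=1}^{n} (λ_j/λ_i)^{n_r}) · (Σ_{k,l=1}^{n} (P^{−1})_{ik} P_{lj} λ_u^{n_k−n_l}) = n·δ_{ij}. Then for all i, j ∈ {1,…,n}: Σ_{a=1}^{n} (λ_i/λ_j)^{n_a} = n·δ_{ij}; in particular the master matrix Ω defined by Ω_{ij} = λ_i^{n_j} is invertible and satisfies the generalized Hadamard condition 1/Ω_{ij} = n·(Ω^{−1})_{ji} for all i, j. -/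
open Matrix

/-- if the master equation holds, then
`Σ_a (λ_i/λ_j)^(n_a) = n δ_{ij}` for all `i, j`; in particular the master matrix
`Ω`, `Ω_{ij} = λ_i^(n_j)`, is invertible and satisfies the generalized Hadamard
condition `1/Ω_{ij} = n (Ω⁻¹)_{ji}`. -/
theorem master_matrix_is_GHM (n : ℕ) (hn : 1 ≤ n)
    (P : Matrix (Fin n) (Fin n) ℂ) (hP : IsUnit P)
    (lam : Fin n → ℂ) (hlam : ∀ i, lam i ≠ 0)
    (e : Fin n → ℤ)
    (hmaster : ∀ i j u : Fin n,
      (∑ r : Fin n, (lam j / lam i) ^ (e r)) *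
        (∑ k : Fin n, ∑ l : Fin n, P⁻¹ i k * P l j * lam u ^ (e k - e l)) =
        if i = j then (n : ℂ) else 0)
    (Ω : Matrix (Fin n) (Fin n) ℂ)
    (hΩ : Ω = Matrix.of fun i j => lam i ^ (e j)) :
    (∀ i j : Fin n, ∑ a : Fin n, (lam i / lam j) ^ (e a) = if i = j then (n : ℂ) else 0)
      ∧ IsUnit Ω
      ∧ ∀ i j : Fin n, (Ω i j)⁻¹ = (n : ℂ) * Ω⁻¹ j i := by
  have hn0 : (n : ℂ) ≠ 0 := Nat.cast_ne_zero.mpr (by omega)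
  set u : Fin n := ⟨0, hn⟩ with hu
  set A : Fin n → ℂ := fun i => ∑ k : Fin n, P⁻¹ i k * lam u ^ (e k) with hA
  set B : Fin n → ℂ := fun j => ∑ l : Fin n, P l j * lam u ^ (-(e l)) with hB
  have hfact : ∀ i j : Fin n,
      (∑ k : Fin n, ∑ l : Fin n, P⁻¹ i k * P l j * lam u ^ (e k - e l)) = A i * B j := by
    intro i j
    rw [hA, hB, Finset.sum_mul_sum]
    refine Finset.sum_congr rfl fun k _ => Finset.sum_congr rfl fun l _ => ?_
    rw [zpow_sub₀ (hlam u), _root_.zpow_neg]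
    field_simp
  have hdiag : ∀ i : Fin n, A i * B i = 1 := by
    intro i
    have h := hmaster i i u
    rw [hfact, if_pos rfl] at h
    have hsum : (∑ r : Fin n, (lam i / lam i) ^ (e r)) = (n : ℂ) := by
      simp [div_self (hlam i)]
    rw [hsum] at h
    exact mul_left_cancel₀ hn0 (by rw [h, mul_one])
  have hAne : ∀ i, A i ≠ 0 := fun i => left_ne_zero_of_mul_eq_one (hdiag i)
  have hBne : ∀ i, B i ≠ 0 := fun i => right_ne_zero_of_mul_eq_one (hdiag i)
  have key : ∀ i j : Fin n, i ≠ j → (∑ r : Fin n, (lam j / lam i) ^ (e r)) = 0 := by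
    intro i j hij
    have h := hmaster i j u
    rw [hfact, if_neg hij] at h
    rcases mul_eq_zero.mp h with h | h
    · exact h
    · exact absurd h (mul_ne_zero (hAne i) (hBne j))
  have claim1 : ∀ i j : Fin n,
      ∑ a : Fin n, (lam i / lam j) ^ (e a) = if i = j then (n : ℂ) else 0 := by
    intro i j
    by_cases h : i = j
    · subst h; simp [div_self (hlam i)]
    · rw [if_neg h]; exact key j i (Ne.symm h)
  -- right inverse
  set M : Matrix (Fin n) (Fin n) ℂ :=
    Matrix.of (fun j k => (n : ℂ)⁻¹ * lam k ^ (-(e j))) with hM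
  have hright : Ω * M = 1 := by
    ext i k
    simp only [Matrix.mul_apply, hΩ, hM, Matrix.of_apply, Matrix.one_apply]
    have : ∀ j : Fin n, lam i ^ (e j) * ((n : ℂ)⁻¹ * lam k ^ (-(e j)))
        = (n : ℂ)⁻¹ * (lam i / lam k) ^ (e j) := by
      intro j
      rw [div_zpow, _root_.zpow_neg, div_eq_mul_inv]
      ring
    rw [Finset.sum_congr rfl fun j _ => this j, ← Finset.mul_sum, claim1]
    by_cases h : i = k
    · simp [h, inv_mul_cancel₀ hn0]
    · simp [h]
  have hinvΩ : Invertible Ω := invertibleOfRightInverse _ _ hright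
  have hΩinv : Ω⁻¹ = M := Matrix.inv_eq_right_inv hright
  refine ⟨claim1, isUnit_of_invertible Ω, fun i j => ?_⟩
  rw [hΩinv, hΩ]
  simp only [Matrix.of_apply, hM]
  rw [_root_.zpow_neg, ← mul_assoc, mul_inv_cancel₀ hn0, one_mul]
end

section
/- Let n ≥ 1, let P be an invertible n×n complex matrix, let λ_1,…,λ_n be nonzero complex numbers and n_1,…,n_n be integers, and suppose the master equation holds: for all i, j, u ∈ {1,…,n}, (Σ_{r=1}^{n} (λ_j/λ_i)^{n_r}) · (Σ_{k,l=1}^{n} (P^{−1})_{ik} P_{lj} λ_u^{n_k−n_l}) = n·δ_{ij}. Then the integers n_1,…,n_n are pairwise distinct and the complex numbers λ_1,…,λ_n are pairwise distinct. -/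
open Matrix

/-- if the master equation holds then the integers `n_1, …, n_n` are
pairwise distinct and the eigenvalues `λ_1, …, λ_n` are pairwise distinct. -/
theorem master_equation_distinct (n : ℕ) (hn : 1 ≤ n)
    (P : Matrix (Fin n) (Fin n) ℂ) (hP : IsUnit P)
    (lam : Fin n → ℂ) (hlam : ∀ i, lam i ≠ 0)
    (e : Fin n → ℤ)
    (hmaster : ∀ i j u : Fin n,
      (∑ r : Fin n, (lam j / lam i) ^ (e r)) *
        (∑ k : Fin n, ∑ l : Fin n, P⁻¹ i k * P l j * lam u ^ (e k - e l)) =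
        if i = j then (n : ℂ) else 0) :
    Function.Injective e ∧ Function.Injective lam := by
  have hn0 : (n : ℂ) ≠ 0 := Nat.cast_ne_zero.mpr (by omega)
  set u : Fin n := ⟨0, hn⟩ with hu
  set x : Fin n → ℂ := fun i => ∑ k, P⁻¹ i k * lam u ^ (e k) with hx
  set y : Fin n → ℂ := fun j => ∑ l, P l j * lam u ^ (-(e l)) with hy
  have hT : ∀ i j : Fin n,
      (∑ k : Fin n, ∑ l : Fin n, P⁻¹ i k * P l j * lam u ^ (e k - e l)) = x i * y j := by
    intro i j
    rw [hx, hy, Finset.sum_mul_sum]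
    refine Finset.sum_congr rfl fun k _ => Finset.sum_congr rfl fun l _ => ?_
    rw [sub_eq_add_neg, zpow_add₀ (hlam u)]
    ring
  have hSone : ∀ i : Fin n, (∑ r : Fin n, (lam i / lam i) ^ (e r)) = (n : ℂ) := by
    intro i
    simp [div_self (hlam i)]
  have hdiag : ∀ i : Fin n, x i * y i = 1 := by
    intro i
    have h := hmaster i i u
    rw [if_pos rfl, hT, hSone] at h
    have := mul_left_cancel₀ hn0 (h.trans (mul_one (n : ℂ)).symm)
    exact this
  have hS : ∀ i j : Fin n, i ≠ j → (∑ r : Fin n, (lam j / lam i) ^ (e r)) = 0 := by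
    intro i j hij
    have h := hmaster i j u
    rw [if_neg hij, hT] at h
    have hxi : x i ≠ 0 := left_ne_zero_of_mul_eq_one (hdiag i)
    have hyj : y j ≠ 0 := right_ne_zero_of_mul_eq_one (hdiag j)
    exact (mul_eq_zero.mp h).resolve_right (mul_ne_zero hxi hyj)
  constructor
  · -- e injective
    intro a b hab
    by_contra hne
    set D : Matrix (Fin n) (Fin n) ℂ := Matrix.of fun i r => lam i ^ (e r) with hD
    set E : Matrix (Fin n) (Fin n) ℂ := Matrix.of fun r i => lam i ^ (-(e r)) with hE
    have hDE : D * E = (n : ℂ) • (1 : Matrix (Fin n) (Fin n) ℂ) := by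
      ext i j
      rw [Matrix.mul_apply]
      have : ∀ r : Fin n, D i r * E r j = (lam i / lam j) ^ (e r) := by
        intro r
        rw [hD, hE]
        simp only [Matrix.of_apply]
        rw [div_zpow, _root_.zpow_neg, div_eq_mul_inv]
      rw [Finset.sum_congr rfl fun r _ => this r]
      by_cases hij : i = j
      · subst hij
        rw [hSone i]
        simp
      · rw [hS j i (Ne.symm hij)]
        simp [Matrix.one_apply_ne hij]
    have hdetE : E.det = 0 := by
      apply Matrix.det_zero_of_row_eq hne
      ext i
      rw [hE]
      simp only [Matrix.of_apply]
      rw [hab]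
    have h1 : (D * E).det = 0 := by rw [Matrix.det_mul, hdetE, mul_zero]
    rw [hDE] at h1
    simp only [Matrix.det_smul, Matrix.det_one, mul_one, Fintype.card_fin] at h1
    exact absurd h1 (pow_ne_zero _ hn0)
  · -- lam injective
    intro a b hab
    by_contra hne
    have h := hS b a (Ne.symm hne)
    rw [hab, hSone b] at h
    exact hn0 h
end

section
/- Let n ≥ 1, let P be an invertible n×n complex matrix, let λ_1,…,λ_n be nonzero complex numbers and n_1,…,n_n be integers, let Ω be the matrix with Ω_{ij} = λ_i^{n_j} and Ω^{−H} the matrix with (Ω^{−H})_{ij} = 1/Ω_{ij}, and suppose the master equation holds: for all i, j, u ∈ {1,…,n}, (Σ_{r=1}^{n} (λ_j/λ_i)^{n_r}) · (Σ_{k,l=1}^{n} (P^{−1})_{ik} P_{lj} λ_u^{n_k−n_l}) = n·δ_{ij}. Then the matrices P^{−1}·Ωᵗ and Ω^{−H}·P are full, i.e. all of their entries are nonzero. -/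
open Matrix

/-- if the master equation holds, then the matrices `P⁻¹ Ωᵗ` and
`Ω^{-H} P` are full, i.e. all of their entries are nonzero. Here `Ω_{ij} = λ_i^(n_j)`
and `(Ω^{-H})_{ij} = 1/Ω_{ij}` is the Hadamard inverse. -/
theorem full_matrices_of_master_equation (n : ℕ) (hn : 1 ≤ n)
    (P : Matrix (Fin n) (Fin n) ℂ) (hP : IsUnit P)
    (lam : Fin n → ℂ) (hlam : ∀ i, lam i ≠ 0)
    (e : Fin n → ℤ)
    (Ω : Matrix (Fin n) (Fin n) ℂ)
    (hΩ : Ω = Matrix.of fun i j => lam i ^ (e j))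
    (ΩH : Matrix (Fin n) (Fin n) ℂ)
    (hΩH : ΩH = Matrix.of fun i j => (Ω i j)⁻¹)
    (hmaster : ∀ i j u : Fin n,
      (∑ r : Fin n, (lam j / lam i) ^ (e r)) *
        (∑ k : Fin n, ∑ l : Fin n, P⁻¹ i k * P l j * lam u ^ (e k - e l)) =
        if i = j then (n : ℂ) else 0) :
    (∀ i u : Fin n, (P⁻¹ * Ωᵀ) i u ≠ 0) ∧ (∀ u i : Fin n, (ΩH * P) u i ≠ 0) := by
  have hn0 : (n : ℂ) ≠ 0 := Nat.cast_ne_zero.mpr (by omega)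
  have key : ∀ i u : Fin n, ((P⁻¹ * Ωᵀ) i u) * ((ΩH * P) u i) = 1 := by
    intro i u
    have h := hmaster i i u
    rw [if_pos rfl] at h
    have h1 : (∑ r : Fin n, (lam i / lam i) ^ (e r)) = (n : ℂ) := by
      simp [div_self (hlam i)]
    rw [h1] at h
    have h2 : (∑ k : Fin n, ∑ l : Fin n, P⁻¹ i k * P l i * lam u ^ (e k - e l)) = 1 :=
      mul_left_cancel₀ hn0 (by rw [h, mul_one])
    have hfac : ((P⁻¹ * Ωᵀ) i u) * ((ΩH * P) u i)
        = ∑ k : Fin n, ∑ l : Fin n, P⁻¹ i k * P l i * lam u ^ (e k - e l) := by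
      rw [Matrix.mul_apply, Matrix.mul_apply, Finset.sum_mul_sum]
      refine Finset.sum_congr rfl fun k _ => Finset.sum_congr rfl fun l _ => ?_
      rw [hΩ, hΩH, hΩ]
      simp only [Matrix.transpose_apply, Matrix.of_apply]
      rw [zpow_sub₀ (hlam u)]
      field_simp
    rw [hfac, h2]
  exact ⟨fun i u => left_ne_zero_of_mul_eq_one (key i u),
         fun u i => right_ne_zero_of_mul_eq_one (key i u)⟩
end

section
/- Let n ≥ 1, let λ_1,…,λ_n be nonzero complex numbers and n_1,…,n_n integers satisfying Σ_{a=1}^{n} (λ_i/λ_j)^{n_a} = n·δ_{ij} for all i, j, let Ω be the matrix with Ω_{ij} = λ_i^{n_j} and Ω^{−H} its Hadamard inverse, and let P be an invertible n×n complex matrix. Then the condition (P^{−1}·Ωᵗ)_{iu} · (Ω^{−H}·P)_{ui} = 1 for all i, u ∈ {1,…,n} holds if and only if the matrix H := Ω^{−H}·P is a generalized Hadamard matrix, i.e. H is invertible, all entries of H are nonzero, and 1/H_{ij} = n·(H^{−1})_{ji} for all i, j. -/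
open Matrix

/-- given the generalized Hadamard condition on the master matrix
(`Σ_a (λ_i/λ_j)^(n_a) = n δ_{ij}`), the eigenvector condition
`(P⁻¹ Ωᵗ)_{iu} (Ω^{-H} P)_{ui} = 1` for all `i, u` holds iff the matrix
`H := Ω^{-H} P` is a generalized Hadamard matrix. -/
theorem eigenvector_condition_iff_GHM (n : ℕ) (hn : 1 ≤ n)
    (lam : Fin n → ℂ) (hlam : ∀ i, lam i ≠ 0)
    (e : Fin n → ℤ)
    (hGH : ∀ i j : Fin n, ∑ a : Fin n, (lam i / lam j) ^ (e a) =
      if i = j then (n : ℂ) else 0)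
    (Ω : Matrix (Fin n) (Fin n) ℂ)
    (hΩ : Ω = Matrix.of fun i j => lam i ^ (e j))
    (ΩH : Matrix (Fin n) (Fin n) ℂ)
    (hΩH : ΩH = Matrix.of fun i j => (Ω i j)⁻¹)
    (P : Matrix (Fin n) (Fin n) ℂ) (hP : IsUnit P)
    (H : Matrix (Fin n) (Fin n) ℂ) (hH : H = ΩH * P) :
    (∀ i u : Fin n, (P⁻¹ * Ωᵀ) i u * (ΩH * P) u i = 1) ↔
      (IsUnit H ∧ (∀ i j : Fin n, H i j ≠ 0) ∧
        ∀ i j : Fin n, (H i j)⁻¹ = (n : ℂ) * H⁻¹ j i) := by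
  have hn0 : (n : ℂ) ≠ 0 := Nat.cast_ne_zero.mpr (by omega)
  -- key identity: ΩH * Ωᵀ = n • 1
  have key : ΩH * Ωᵀ = (n : ℂ) • (1 : Matrix (Fin n) (Fin n) ℂ) := by
    ext i j
    have h := hGH j i
    simp only [hΩ, hΩH, Matrix.mul_apply, Matrix.transpose_apply, Matrix.of_apply,
      Matrix.smul_apply, Matrix.one_apply, smul_eq_mul, mul_ite, mul_one, mul_zero]
    have hsum : ∀ a : Fin n, (lam i ^ e a)⁻¹ * lam j ^ e a = (lam j / lam i) ^ e a := by
      intro a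
      rw [div_zpow, div_eq_mul_inv, mul_comm]
    simp_rw [hsum]
    rw [h]
    by_cases hij : i = j <;> simp [hij, eq_comm]
  have hPinv : P * P⁻¹ = 1 := Matrix.mul_nonsing_inv P ((Matrix.isUnit_iff_isUnit_det P).mp hP)
  have hH1 : H * ((n : ℂ)⁻¹ • (P⁻¹ * Ωᵀ)) = 1 := by
    rw [hH, Matrix.mul_smul, ← mul_assoc, mul_assoc ΩH P P⁻¹, hPinv, mul_one, key,
      smul_smul, inv_mul_cancel₀ hn0, one_smul]
  have hHinv : H⁻¹ = (n : ℂ)⁻¹ • (P⁻¹ * Ωᵀ) := Matrix.inv_eq_right_inv hH1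
  have hHunit : IsUnit H := (Matrix.isUnit_iff_isUnit_det H).mpr
    (Matrix.isUnit_det_of_right_inverse hH1)
  have hentry : ∀ i u : Fin n, (P⁻¹ * Ωᵀ) i u = (n : ℂ) * H⁻¹ i u := by
    intro i u
    rw [hHinv]
    simp only [Matrix.smul_apply, smul_eq_mul]
    field_simp
  constructor
  · intro hc
    refine ⟨hHunit, ?_, ?_⟩
    · intro i j
      have h := hc j i
      rw [hentry, ← hH] at h
      exact right_ne_zero_of_mul_eq_one h
    · intro i j
      have h := hc j i
      rw [hentry, ← hH] at h
      exact (eq_inv_of_mul_eq_one_left h).symm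
  · rintro ⟨-, hne, hinv⟩ i u
    rw [hentry, ← hH, ← hinv u i]
    exact inv_mul_cancel₀ (hne u i)
end

section
/- Diţă's construction for generalized Hadamard matrices: let A be an n×n generalized Hadamard matrix and let B^{(1)},…,B^{(n)} be m×m generalized Hadamard matrices. Then the nm×nm matrix C indexed by pairs, defined by C_{(i,k),(j,l)} = A_{ij}·B^{(i)}_{kl} for i,j ∈ {1,…,n} and k,l ∈ {1,…,m}, is a generalized Hadamard matrix: C is invertible, all its entries are nonzero, and 1/C_{pq} = nm·(C^{−1})_{qp} for all indices p, q. -/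
open Matrix

/-- Diţă's construction for generalized Hadamard matrices. If `A` is
an `n×n` GHM and `B⁽¹⁾, …, B⁽ⁿ⁾` are `m×m` GHMs, then the `nm×nm` matrix
`C_{(i,k),(j,l)} = A_{ij} B⁽ⁱ⁾_{kl}` is a GHM. -/
theorem dita_construction_GHM (n m : ℕ)
    (A : Matrix (Fin n) (Fin n) ℂ)
    (hAunit : IsUnit A) (hAfull : ∀ i j : Fin n, A i j ≠ 0)
    (hAGHM : ∀ i j : Fin n, (A i j)⁻¹ = (n : ℂ) * A⁻¹ j i)
    (B : Fin n → Matrix (Fin m) (Fin m) ℂ)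
    (hBunit : ∀ i, IsUnit (B i)) (hBfull : ∀ i, ∀ k l : Fin m, B i k l ≠ 0)
    (hBGHM : ∀ i, ∀ k l : Fin m, (B i k l)⁻¹ = (m : ℂ) * (B i)⁻¹ l k)
    (C : Matrix (Fin n × Fin m) (Fin n × Fin m) ℂ)
    (hC : C = Matrix.of fun p q : Fin n × Fin m => A p.1 q.1 * B p.1 p.2 q.2) :
    IsUnit C ∧ (∀ p q : Fin n × Fin m, C p q ≠ 0) ∧
      ∀ p q : Fin n × Fin m, (C p q)⁻¹ = ((n * m : ℕ) : ℂ) * C⁻¹ q p := by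
  have hAdet : IsUnit A.det := (Matrix.isUnit_iff_isUnit_det A).mp hAunit
  have hBdet : ∀ i, IsUnit (B i).det := fun i => (Matrix.isUnit_iff_isUnit_det _).mp (hBunit i)
  have hAinv : A * A⁻¹ = 1 := Matrix.mul_nonsing_inv A hAdet
  have hBinv : ∀ i, B i * (B i)⁻¹ = 1 := fun i => Matrix.mul_nonsing_inv _ (hBdet i)
  set D : Matrix (Fin n × Fin m) (Fin n × Fin m) ℂ :=
    Matrix.of (fun q p : Fin n × Fin m => A⁻¹ q.1 p.1 * (B p.1)⁻¹ q.2 p.2) with hD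
  have hCD : C * D = 1 := by
    ext p q
    simp only [Matrix.mul_apply, hC, hD, Matrix.of_apply]
    rw [Fintype.sum_prod_type]
    have : ∀ j : Fin n, ∑ l : Fin m,
        A p.1 j * B p.1 p.2 l * (A⁻¹ j q.1 * (B q.1)⁻¹ l q.2)
        = (A p.1 j * A⁻¹ j q.1) * ∑ l : Fin m, B p.1 p.2 l * (B q.1)⁻¹ l q.2 := by
      intro j
      rw [Finset.mul_sum]
      congr 1; ext l; ring
    simp only [this]
    rw [← Finset.sum_mul]
    have hA1 : ∑ j : Fin n, A p.1 j * A⁻¹ j q.1 = (1 : Matrix (Fin n) (Fin n) ℂ) p.1 q.1 := by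
      rw [← Matrix.mul_apply, hAinv]
    rw [hA1, Matrix.one_apply]
    by_cases h1 : p.1 = q.1
    · have hB1 : ∑ l : Fin m, B p.1 p.2 l * (B q.1)⁻¹ l q.2
          = (1 : Matrix (Fin m) (Fin m) ℂ) p.2 q.2 := by
        rw [h1, ← Matrix.mul_apply, hBinv]
      rw [if_pos h1, hB1, one_mul, Matrix.one_apply, Matrix.one_apply]
      by_cases h2 : p.2 = q.2
      · rw [if_pos h2, if_pos (Prod.ext h1 h2)]
      · rw [if_neg h2, if_neg (fun h => h2 (congrArg Prod.snd h))]
    · rw [if_neg h1, zero_mul, Matrix.one_apply,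
        if_neg (fun h => h1 (congrArg Prod.fst h))]
  have hCunit : IsUnit C := by
    have := invertibleOfRightInverse C D hCD
    exact isUnit_of_invertible C
  have hCinv : C⁻¹ = D := Matrix.inv_eq_right_inv hCD
  refine ⟨hCunit, ?_, ?_⟩
  · intro p q
    rw [hC]
    exact mul_ne_zero (hAfull _ _) (hBfull _ _ _)
  · intro p q
    rw [hCinv, hC]
    simp only [Matrix.of_apply]
    rw [mul_inv, hAGHM, hBGHM]
    simp only [hD, Matrix.of_apply]
    push_cast
    ring
end

section
/- For every nonzero complex number a, the 4×4 matrix Ω = [[1,1,1,1],[1,−1,1,−1],[1,a,−1,−a],[1,−a,−1,a]] is a generalized Hadamard matrix: Ω is invertible, all its entries are nonzero, and 1/Ω_{ij} = 4·(Ω^{−1})_{ji} for all i, j ∈ {1,2,3,4}. -/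
open Matrix

/-- for every nonzero complex number `a`, the thickened `F₄` matrix
`Ω = [[1,1,1,1],[1,−1,1,−1],[1,a,−1,−a],[1,−a,−1,a]]` is a generalized Hadamard
matrix. -/
theorem thickened_F4_is_GHM (a : ℂ) (ha : a ≠ 0)
    (Ω : Matrix (Fin 4) (Fin 4) ℂ)
    (hΩ : Ω = !![1, 1, 1, 1;
                 1, -1, 1, -1;
                 1, a, -1, -a;
                 1, -a, -1, a]) :
    IsUnit Ω ∧ (∀ i j : Fin 4, Ω i j ≠ 0) ∧
      ∀ i j : Fin 4, (Ω i j)⁻¹ = (4 : ℂ) * Ω⁻¹ j i := by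
  set B : Matrix (Fin 4) (Fin 4) ℂ :=
    (4 : ℂ)⁻¹ • !![1, 1, 1, 1;
                   1, -1, a⁻¹, -a⁻¹;
                   1, 1, -1, -1;
                   1, -1, -a⁻¹, a⁻¹] with hB
  have hmul : Ω * B = 1 := by
    subst hΩ
    ext i j
    fin_cases i <;> fin_cases j <;>
      simp [hB, Matrix.mul_apply, Fin.sum_univ_succ, Matrix.one_apply, Matrix.vecHead, Matrix.vecTail] <;>
      field_simp <;> ring
  have hinv : Ω⁻¹ = B := Matrix.inv_eq_right_inv hmul
  have hunit : IsUnit Ω := (Matrix.isUnit_iff_isUnit_det Ω).mpr (Matrix.isUnit_det_of_right_inverse hmul)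
  refine ⟨hunit, ?_, ?_⟩
  · intro i j
    subst hΩ
    fin_cases i <;> fin_cases j <;> simp [Matrix.vecHead, Matrix.vecTail, ha]
  · intro i j
    rw [hinv]
    subst hΩ
    fin_cases i <;> fin_cases j <;>
      simp [hB, Matrix.vecHead, Matrix.vecTail] <;> field_simp
end

section
/- Let k, r, s be integers with 0 < r < k and 0 < s < k, let ω = exp(iπ/3) (a primitive 6th root of unity), and define λ_1 = 1, λ_3 = ω², λ_5 = ω⁴, λ_2 = exp(iπ/(3k)), λ_4 = ω²·exp(iπ/(3k)), λ_6 = ω⁴·exp(iπ/(3k)), together with the exponents n_1 = 0, n_2 = 3r+1, n_3 = 3s+2, n_4 = 3k, n_5 = 3k+3r+1, n_6 = 3k+3s+2. Then for all i, j ∈ {1,…,6}: Σ_{a=1}^{6} (λ_i/λ_j)^{n_a} = 6·δ_{ij}. Equivalently, every ratio λ_i/λ_j with i ≠ j is a root of the master polynomial p(z) = (1+z^{3r+1}+z^{3s+2})(1+z^{3k}). -/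
open Matrix Complex

/-- `F₆` master matrices. Let `0 < r < k`, `0 < s < k`,
`ω = exp(iπ/3)`, `λ = (1, e, ω², ω²e, ω⁴, ω⁴e)` with `e = exp(iπ/(3k))` and
exponents `(0, 3r+1, 3s+2, 3k, 3k+3r+1, 3k+3s+2)`. Then
`Σ_a (λ_i/λ_j)^(n_a) = 6 δ_{ij}`; equivalently every ratio `λ_i/λ_j` with `i ≠ j`
is a root of the master polynomial `p(z) = (1+z^(3r+1)+z^(3s+2))(1+z^(3k))`. -/
theorem F6_master_matrix (k r s : ℕ)
    (hr : 0 < r) (hrk : r < k) (hs : 0 < s) (hsk : s < k)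
    (ω : ℂ) (hω : ω = Complex.exp (Real.pi * Complex.I / 3))
    (lam : Fin 6 → ℂ)
    (hlam : lam = ![1,
      Complex.exp (Real.pi * Complex.I / (3 * (k : ℂ))),
      ω ^ 2,
      ω ^ 2 * Complex.exp (Real.pi * Complex.I / (3 * (k : ℂ))),
      ω ^ 4,
      ω ^ 4 * Complex.exp (Real.pi * Complex.I / (3 * (k : ℂ)))])
    (ex : Fin 6 → ℕ)
    (hex : ex = ![0, 3 * r + 1, 3 * s + 2, 3 * k, 3 * k + 3 * r + 1, 3 * k + 3 * s + 2]) :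
    (∀ i j : Fin 6,
      ∑ a : Fin 6, (lam i / lam j) ^ (ex a) = if i = j then (6 : ℂ) else 0)
      ∧ ∀ i j : Fin 6, i ≠ j →
          (1 + (lam i / lam j) ^ (3 * r + 1) + (lam i / lam j) ^ (3 * s + 2)) *
            (1 + (lam i / lam j) ^ (3 * k)) = 0 := by
  subst hlam hex
  set E := Complex.exp (Real.pi * Complex.I / (3 * (k : ℂ))) with hEdef
  -- basic facts
  have hk0 : ((k : ℂ)) ≠ 0 := by exact_mod_cast (Nat.lt_of_lt_of_le hr hrk.le).ne'
  have hω0 : ω ≠ 0 := by rw [hω]; exact Complex.exp_ne_zero _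
  have hE0 : E ≠ 0 := Complex.exp_ne_zero _
  have hω3 : ω ^ 3 = -1 := by
    rw [hω, ← Complex.exp_nat_mul,
      show ((3 : ℕ) : ℂ) * (↑Real.pi * Complex.I / 3) = ↑Real.pi * Complex.I by
        push_cast; ring]
    exact Complex.exp_pi_mul_I
  have hω6 : ω ^ 6 = 1 := by linear_combination (ω ^ 3 - 1) * hω3
  have hE3k : E ^ (3 * k) = -1 := by
    rw [hEdef, ← Complex.exp_nat_mul,
      show ((3 * k : ℕ) : ℂ) * (↑Real.pi * Complex.I / (3 * (k : ℂ)))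
          = ↑Real.pi * Complex.I by push_cast; field_simp]
    exact Complex.exp_pi_mul_I
  have hne : ω ^ 2 ≠ 1 := by
    intro h
    rw [hω, ← Complex.exp_nat_mul] at h
    obtain ⟨n, hn⟩ := Complex.exp_eq_one_iff.mp h
    have hπ : (Real.pi : ℂ) ≠ 0 := by exact_mod_cast Real.pi_ne_zero
    have hI := Complex.I_ne_zero
    field_simp at hn
    have h2 : (2 : ℂ) * (Real.pi * Complex.I) * (1 - n * 3) = 0 := by linear_combination (↑Real.pi * Complex.I) * hn
    have h3 : (1 : ℂ) - n * 3 = 0 := by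
      rcases mul_eq_zero.mp h2 with h' | h'
      · rcases mul_eq_zero.mp h' with h' | h'
        · norm_num at h'
        · rcases mul_eq_zero.mp h' with h' | h'
          · exact absurd h' hπ
          · exact absurd h' hI
      · exact h'
    have : (1 : ℤ) - n * 3 = 0 := by exact_mod_cast h3
    omega
  have hc : 1 + ω ^ 2 + ω ^ 4 = 0 := by
    have h : (ω ^ 2 - 1) * (1 + ω ^ 2 + ω ^ 4) = 0 := by linear_combination hω6
    rcases mul_eq_zero.mp h with h' | h'
    · exact absurd (by linear_combination h') hne
    · exact h'
  have hA : (ω ^ 2) ^ (3 * k) = 1 := by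
    rw [← pow_mul, show 2 * (3 * k) = 6 * k by ring, pow_mul, hω6, one_pow]
  have hB : (ω ^ 4) ^ (3 * k) = 1 := by
    rw [← pow_mul, show 4 * (3 * k) = 6 * (2 * k) by ring, pow_mul, hω6, one_pow]
  have h2c : (ω ^ 2) ^ 3 = 1 := by linear_combination hω6
  have h4c : (ω ^ 4) ^ 3 = 1 := by linear_combination (ω ^ 6 + 1) * hω6
  -- the two structural lemmas
  have crossE : ∀ z : ℂ, z ^ (3 * k) = -1 →
      (1 + z ^ (3 * r + 1) + z ^ (3 * s + 2)) * (1 + z ^ (3 * k)) = 0 := by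
    intro z hz; rw [hz]; ring
  have cube : ∀ z : ℂ, z ^ 3 = 1 → 1 + z + z ^ 2 = 0 →
      (1 + z ^ (3 * r + 1) + z ^ (3 * s + 2)) * (1 + z ^ (3 * k)) = 0 := by
    intro z h3 hzc
    have e1 : z ^ (3 * r + 1) = z := by
      rw [pow_add, pow_mul, h3, one_pow, pow_one, one_mul]
    have e2 : z ^ (3 * s + 2) = z ^ 2 := by
      rw [pow_add, pow_mul, h3, one_pow, one_mul]
    rw [e1, e2, hzc, zero_mul]
  have W2 : ∀ z : ℂ, z = ω ^ 2 →
      (1 + z ^ (3 * r + 1) + z ^ (3 * s + 2)) * (1 + z ^ (3 * k)) = 0 := by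
    rintro z rfl; exact cube _ h2c (by linear_combination hc)
  have W4 : ∀ z : ℂ, z = ω ^ 4 →
      (1 + z ^ (3 * r + 1) + z ^ (3 * s + 2)) * (1 + z ^ (3 * k)) = 0 := by
    rintro z rfl; exact cube _ h4c (by linear_combination hc + ω ^ 2 * hω6)
  have key : ∀ i j : Fin 6, i ≠ j →
      (1 + ((![1, E, ω ^ 2, ω ^ 2 * E, ω ^ 4, ω ^ 4 * E] : Fin 6 → ℂ) i /
            (![1, E, ω ^ 2, ω ^ 2 * E, ω ^ 4, ω ^ 4 * E] : Fin 6 → ℂ) j) ^ (3 * r + 1) +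
          ((![1, E, ω ^ 2, ω ^ 2 * E, ω ^ 4, ω ^ 4 * E] : Fin 6 → ℂ) i /
            (![1, E, ω ^ 2, ω ^ 2 * E, ω ^ 4, ω ^ 4 * E] : Fin 6 → ℂ) j) ^ (3 * s + 2)) *
        (1 + ((![1, E, ω ^ 2, ω ^ 2 * E, ω ^ 4, ω ^ 4 * E] : Fin 6 → ℂ) i /
            (![1, E, ω ^ 2, ω ^ 2 * E, ω ^ 4, ω ^ 4 * E] : Fin 6 → ℂ) j) ^ (3 * k)) = 0 := by
    intro i j hij
    fin_cases i <;> fin_cases j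
    -- row 0 : numerator 1
    · exact absurd rfl hij
    · exact crossE ((1 : ℂ) / E)
        (by simp only [div_pow, mul_pow, one_pow, hA, hB, hE3k]; norm_num)
    · exact W4 ((1 : ℂ) / ω ^ 2)
        (by field_simp [hω0, hE0]; first | ring1 | linear_combination hω6 | linear_combination -hω6)
    · exact crossE ((1 : ℂ) / (ω ^ 2 * E))
        (by simp only [div_pow, mul_pow, one_pow, hA, hB, hE3k]; norm_num)
    · exact W2 ((1 : ℂ) / ω ^ 4)
        (by field_simp [hω0, hE0]; first | ring1 | linear_combination hω6 | linear_combination -hω6)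
    · exact crossE ((1 : ℂ) / (ω ^ 4 * E))
        (by simp only [div_pow, mul_pow, one_pow, hA, hB, hE3k]; norm_num)
    -- row 1 : numerator E
    · exact crossE (E / 1)
        (by simp only [div_pow, mul_pow, one_pow, hA, hB, hE3k]; norm_num)
    · exact absurd rfl hij
    · exact crossE (E / ω ^ 2)
        (by simp only [div_pow, mul_pow, one_pow, hA, hB, hE3k]; norm_num)
    · exact W4 (E / (ω ^ 2 * E))
        (by field_simp [hω0, hE0]; first | ring1 | linear_combination hω6 | linear_combination -hω6 | linear_combination E * hω6 | linear_combination -(E * hω6))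
    · exact crossE (E / ω ^ 4)
        (by simp only [div_pow, mul_pow, one_pow, hA, hB, hE3k]; norm_num)
    · exact W2 (E / (ω ^ 4 * E))
        (by field_simp [hω0, hE0]; first | ring1 | linear_combination hω6 | linear_combination -hω6 | linear_combination E * hω6 | linear_combination -(E * hω6))
    -- row 2 : numerator ω²
    · exact W2 (ω ^ 2 / 1) (by norm_num)
    · exact crossE (ω ^ 2 / E)
        (by simp only [div_pow, mul_pow, one_pow, hA, hB, hE3k]; norm_num)
    · exact absurd rfl hij
    · exact crossE (ω ^ 2 / (ω ^ 2 * E))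
        (by simp only [div_pow, mul_pow, one_pow, hA, hB, hE3k]; norm_num)
    · exact W4 (ω ^ 2 / ω ^ 4)
        (by field_simp [hω0, hE0]; first | ring1 | linear_combination hω6 | linear_combination -hω6 | linear_combination ω ^ 2 * hω6 | linear_combination -(ω ^ 2 * hω6))
    · exact crossE (ω ^ 2 / (ω ^ 4 * E))
        (by simp only [div_pow, mul_pow, one_pow, hA, hB, hE3k]; norm_num)
    -- row 3 : numerator ω²E
    · exact crossE (ω ^ 2 * E / 1)
        (by simp only [div_pow, mul_pow, one_pow, hA, hB, hE3k]; norm_num)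
    · exact W2 (ω ^ 2 * E / E)
        (by field_simp [hω0, hE0])
    · exact crossE (ω ^ 2 * E / ω ^ 2)
        (by simp only [div_pow, mul_pow, one_pow, hA, hB, hE3k]; norm_num)
    · exact absurd rfl hij
    · exact crossE (ω ^ 2 * E / ω ^ 4)
        (by simp only [div_pow, mul_pow, one_pow, hA, hB, hE3k]; norm_num)
    · exact W4 (ω ^ 2 * E / (ω ^ 4 * E))
        (by field_simp [hω0, hE0]; first | ring1 | linear_combination hω6 | linear_combination -hω6 | linear_combination ω ^ 2 * E * hω6 | linear_combination -(ω ^ 2 * E * hω6) | linear_combination E * hω6 | linear_combination -(E * hω6))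
    -- row 4 : numerator ω⁴
    · exact W4 (ω ^ 4 / 1) (by norm_num)
    · exact crossE (ω ^ 4 / E)
        (by simp only [div_pow, mul_pow, one_pow, hA, hB, hE3k]; norm_num)
    · exact W2 (ω ^ 4 / ω ^ 2)
        (by field_simp [hω0, hE0])
    · exact crossE (ω ^ 4 / (ω ^ 2 * E))
        (by simp only [div_pow, mul_pow, one_pow, hA, hB, hE3k]; norm_num)
    · exact absurd rfl hij
    · exact crossE (ω ^ 4 / (ω ^ 4 * E))
        (by simp only [div_pow, mul_pow, one_pow, hA, hB, hE3k]; norm_num)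
    -- row 5 : numerator ω⁴E
    · exact crossE (ω ^ 4 * E / 1)
        (by simp only [div_pow, mul_pow, one_pow, hA, hB, hE3k]; norm_num)
    · exact W4 (ω ^ 4 * E / E)
        (by field_simp [hω0, hE0])
    · exact crossE (ω ^ 4 * E / ω ^ 2)
        (by simp only [div_pow, mul_pow, one_pow, hA, hB, hE3k]; norm_num)
    · exact W2 (ω ^ 4 * E / (ω ^ 2 * E))
        (by field_simp [hω0, hE0])
    · exact crossE (ω ^ 4 * E / ω ^ 4)
        (by simp only [div_pow, mul_pow, one_pow, hA, hB, hE3k]; norm_num)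
    · exact absurd rfl hij
  have hlamne : ∀ t : Fin 6, (![1, E, ω ^ 2, ω ^ 2 * E, ω ^ 4, ω ^ 4 * E] : Fin 6 → ℂ) t ≠ 0 := by
    intro t
    fin_cases t
    · exact one_ne_zero
    · exact hE0
    · exact pow_ne_zero _ hω0
    · exact mul_ne_zero (pow_ne_zero _ hω0) hE0
    · exact pow_ne_zero _ hω0
    · exact mul_ne_zero (pow_ne_zero _ hω0) hE0
  have hsum : ∀ z : ℂ,
      ∑ a : Fin 6, z ^ (![0, 3 * r + 1, 3 * s + 2, 3 * k, 3 * k + 3 * r + 1,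
        3 * k + 3 * s + 2] : Fin 6 → ℕ) a
        = (1 + z ^ (3 * r + 1) + z ^ (3 * s + 2)) * (1 + z ^ (3 * k)) := by
    intro z
    rw [Fin.sum_univ_six]
    show z ^ 0 + z ^ (3 * r + 1) + z ^ (3 * s + 2) + z ^ (3 * k)
        + z ^ (3 * k + 3 * r + 1) + z ^ (3 * k + 3 * s + 2) = _
    simp only [pow_zero, pow_add, pow_one]
    ring
  constructor
  · intro i j
    rw [hsum]
    by_cases h : i = j
    · subst h
      rw [if_pos rfl, div_self (hlamne i), one_pow, one_pow, one_pow]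
      norm_num
    · rw [if_neg h]
      exact key i j h
  · exact key
end

section
/- Let j = exp(2πi/3) be a primitive cube root of unity and let H₀ be the 6×6 complex matrix [[1,1,1,1,1,1],[1,1,j,j,j²,j²],[1,j,1,j²,j²,j],[1,j,j²,1,j,j²],[1,j²,j²,j,1,j],[1,j²,j,j²,j,1]]. Then H₀ is not a master matrix: there exist no complex numbers λ_1,…,λ_6 and natural numbers n_1,…,n_6 such that (H₀)_{ik} = λ_i^{n_k} for all i, k ∈ {1,…,6}. -/
open Matrix

private lemma descent_aux (j : ℂ) (hj3 : j ^ 3 = 1) (hj1 : j ≠ 1) :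
    ∀ b a : ℕ, ∀ x y : ℂ, x ^ a = 1 → x ^ b = j → y ^ a = j → y ^ b = 1 → False := by
  have hj2 : j ^ 2 ≠ 1 := by
    intro h2
    apply hj1
    calc j = j ^ 2 * j / j ^ 2 := by rw [h2]; field_simp
    _ = j ^ 3 / j ^ 2 := by ring_nf
    _ = 1 / 1 := by rw [hj3, h2]
    _ = 1 := by norm_num
  have hkey : ∀ n : ℕ, j ^ n = 1 → 3 ∣ n := by
    intro n hn
    have hmod : j ^ (n % 3) = 1 := by
      have := Nat.div_add_mod n 3
      calc j ^ (n % 3) = (j ^ 3) ^ (n / 3) * j ^ (n % 3) := by rw [hj3, one_pow, one_mul]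
      _ = j ^ (3 * (n / 3) + n % 3) := by rw [pow_add, pow_mul]
      _ = 1 := by rw [this, hn]
    have hlt : n % 3 < 3 := Nat.mod_lt _ (by norm_num)
    interval_cases h : n % 3
    · omega
    · rw [pow_one] at hmod; exact absurd hmod hj1
    · exact absurd hmod hj2
  intro b
  induction b using Nat.strong_induction_on with
  | _ b ih =>
    intro a x y hxa hxb hya hyb
    have hja : j ^ a = 1 := by
      rw [← hxb, ← pow_mul, mul_comm, pow_mul, hxa, one_pow]
    have hjb : j ^ b = 1 := by
      rw [← hya, ← pow_mul, mul_comm, pow_mul, hyb, one_pow]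
    have h3a : 3 ∣ a := hkey a hja
    have h3b : 3 ∣ b := hkey b hjb
    obtain ⟨a', rfl⟩ := h3a
    obtain ⟨b', rfl⟩ := h3b
    have hb0 : b' ≠ 0 := by
      rintro rfl
      rw [mul_zero, pow_zero] at hxb
      exact hj1 hxb.symm
    refine ih b' (by omega) a' (x ^ 3) (y ^ 3) ?_ ?_ ?_ ?_ <;>
      rw [← pow_mul] <;> assumption

/-- the `6×6` complex Hadamard matrix `H₀` built from a primitive
cube root of unity `j = exp(2πi/3)` is not a master matrix: there are no complex
numbers `λ_1, …, λ_6` and natural numbers `n_1, …, n_6` with `(H₀)_{ik} = λ_i^(n_k)`. -/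
theorem H0_not_master_matrix (j : ℂ) (hj : j = Complex.exp (2 * Real.pi * Complex.I / 3))
    (H₀ : Matrix (Fin 6) (Fin 6) ℂ)
    (hH₀ : H₀ = !![1, 1,     1,     1,     1,     1;
                   1, 1,     j,     j,     j ^ 2, j ^ 2;
                   1, j,     1,     j ^ 2, j ^ 2, j;
                   1, j,     j ^ 2, 1,     j,     j ^ 2;
                   1, j ^ 2, j ^ 2, j,     1,     j;
                   1, j ^ 2, j,     j ^ 2, j,     1]) :
    ¬ ∃ (lam : Fin 6 → ℂ) (e : Fin 6 → ℕ),
        ∀ i k : Fin 6, H₀ i k = lam i ^ (e k) := by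
  have hj3 : j ^ 3 = 1 := by
    rw [hj, ← Complex.exp_nat_mul]
    rw [show (3 : ℕ) * (2 * (Real.pi : ℂ) * Complex.I / 3) = 2 * Real.pi * Complex.I by
      push_cast; ring]
    exact Complex.exp_two_pi_mul_I
  have hj1 : j ≠ 1 := by
    rw [hj, Ne, Complex.exp_eq_one_iff]
    rintro ⟨n, hn⟩
    have hπ : (Real.pi : ℂ) ≠ 0 := by
      exact_mod_cast Real.pi_ne_zero
    have hI : Complex.I ≠ 0 := Complex.I_ne_zero
    have h1 : (3 : ℂ) * n = 1 := by
      field_simp at hn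
      have h2 : (2 : ℂ) * Real.pi * Complex.I * (3 * n - 1) = 0 := by linear_combination (-2 * (Real.pi : ℂ) * Complex.I) * hn
      have h3 : (3 * (n : ℂ) - 1) = 0 := by
        rcases mul_eq_zero.mp h2 with h | h
        · exact absurd h (mul_ne_zero (mul_ne_zero two_ne_zero hπ) hI)
        · exact h
      linear_combination h3
    have : (3 * n : ℤ) = 1 := by exact_mod_cast h1
    omega
  rintro ⟨lam, e, h⟩
  have h11 := h 1 1
  have h12 := h 1 2
  have h21 := h 2 1
  have h22 := h 2 2
  rw [hH₀] at h11 h12 h21 h22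
  simp only [Matrix.cons_val', Matrix.cons_val_zero, Matrix.cons_val_one, Matrix.head_cons,
    Matrix.empty_val', Matrix.cons_val_fin_one, Matrix.head_fin_const,
    show (2 : Fin 6) = Fin.succ (1 : Fin 5) from rfl] at h11 h12 h21 h22
  exact descent_aux j hj3 hj1 (e 2) (e 1) (lam 1) (lam 2) h11.symm h12.symm h21.symm h22.symm
end

section
/- Let n ≥ 1, let M be an invertible n×n complex matrix, let n_1,…,n_n be integers, let v, w ∈ ℂⁿ, and set α = Σ_{a=1}^{n} v_a·w_a. Then the n²×n² matrix T = Σ_{a,b=1}^{n} v_a·w_b·(E_{ab} ⊗ M^{n_a−n_b}) satisfies T² = α·T. -/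
open Matrix Kronecker

/-- for `n ≥ 1`, an invertible `n×n` complex matrix `M`, integers
`n_1, …, n_n` and vectors `v, w ∈ ℂⁿ` with `α = Σ_a v_a w_a`, the generalized
Ansatz matrix `T = Σ_{a,b} v_a w_b (E_{ab} ⊗ M^(n_a - n_b))` satisfies `T² = α T`. -/
theorem generalized_ansatz_idempotent (n : ℕ) (hn : 1 ≤ n)
    (M : Matrix (Fin n) (Fin n) ℂ) (hM : IsUnit M)
    (e : Fin n → ℤ) (v w : Fin n → ℂ)
    (α : ℂ) (hα : α = ∑ a : Fin n, v a * w a)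
    (T : Matrix (Fin n × Fin n) (Fin n × Fin n) ℂ)
    (hT : T = ∑ a : Fin n, ∑ b : Fin n,
      (v a * w b) • ((Matrix.single a b (1 : ℂ)) ⊗ₖ (M ^ (e a - e b)))) :
    T * T = α • T := by
  have hdet : IsUnit M.det := (Matrix.isUnit_iff_isUnit_det M).mp hM
  have key : ∀ a b c d : Fin n,
      ((v a * w b) • ((single a b (1 : ℂ)) ⊗ₖ (M ^ (e a - e b)))) *
      ((v c * w d) • ((single c d (1 : ℂ)) ⊗ₖ (M ^ (e c - e d))))
      = if c = b then (v c * w c) •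
          ((v a * w d) • ((single a d (1 : ℂ)) ⊗ₖ (M ^ (e a - e d)))) else 0 := by
    intro a b c d
    rw [smul_mul_smul_comm, ← Matrix.mul_kronecker_mul]
    by_cases h : c = b
    · subst h
      rw [if_pos rfl, Matrix.single_mul_single_same, one_mul, ← Matrix.zpow_add hdet,
        smul_smul]
      have : e a - e c + (e c - e d) = e a - e d := by ring
      rw [this]
      ring_nf
    · have hb : b ≠ c := Ne.symm h
      simp [if_neg h, hb]
  subst hT hα
  rw [Finset.sum_mul_sum]
  simp only [Finset.sum_mul, Finset.mul_sum, key]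
  simp only [Finset.sum_ite_eq, Finset.mem_univ, if_true]
  rw [Finset.sum_smul, Finset.sum_comm]
  simp only [Finset.smul_sum]
end

section
/- Let n ≥ 1, let M be an invertible n×n complex matrix, let n_1,…,n_n be integers, and let v, w ∈ ℂⁿ satisfy v_a·w_a = 1 for every a ∈ {1,…,n} (in particular every v_a is nonzero). Let g be the invertible diagonal matrix with g_{aa} = 1/v_a and set M̃ = g·M·g^{−1}. Then the generalized Ansatz matrix T = Σ_{a,b=1}^{n} v_a·w_b·(E_{ab} ⊗ M^{n_a−n_b}) is gauge equivalent to the pure-power form: (g ⊗ g)·T·(g ⊗ g)^{−1} = Σ_{a,b=1}^{n} E_{ab} ⊗ M̃^{n_a−n_b}. -/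
open Matrix Kronecker

lemma diag_conj_stdBasis (n : ℕ) (d e : Fin n → ℂ) (a b : Fin n) :
    Matrix.diagonal d * Matrix.single a b (1:ℂ) * Matrix.diagonal e
    = (d a * e b) • Matrix.single a b 1 := by
  ext i j
  simp [Matrix.mul_apply, Matrix.single, Matrix.diagonal, Finset.mul_sum, mul_ite, ite_and]
  by_cases hi : i = a <;> by_cases hj : j = b <;>
    simp [hi, hj, Ne.symm, if_neg, eq_comm, mul_comm]

lemma matConj_zpow (n : ℕ) (g M : Matrix (Fin n) (Fin n) ℂ)
    (hg : IsUnit g.det) (hM : IsUnit M.det) (k : ℤ) :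
    g * M ^ k * g⁻¹ = (g * M * g⁻¹) ^ k := by
  have hMt : IsUnit (g * M * g⁻¹).det := by
    rw [Matrix.det_mul, Matrix.det_mul]
    exact (hg.mul hM).mul ((Matrix.isUnit_nonsing_inv_det_iff).mpr hg)
  have hsc : SemiconjBy g M (g * M * g⁻¹) := by
    unfold SemiconjBy
    rw [Matrix.mul_assoc (g * M) g⁻¹ g, Matrix.nonsing_inv_mul g hg, Matrix.mul_one]
  have := (Matrix.SemiconjBy.zpow_right hM hMt hsc k).eq
  rw [this, Matrix.mul_assoc, Matrix.mul_nonsing_inv g hg, Matrix.mul_one]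

/-- if `v_a w_a = 1` for every `a`, the generalized Ansatz matrix
`T = Σ_{a,b} v_a w_b (E_{ab} ⊗ M^(n_a - n_b))` is gauge equivalent, via the
diagonal matrix `g = diag(1/v_a)`, to the pure-power form for `M̃ = g M g⁻¹`:
`(g ⊗ g) T (g ⊗ g)⁻¹ = Σ_{a,b} E_{ab} ⊗ M̃^(n_a - n_b)`. -/
theorem generalized_ansatz_gauge_equivalent (n : ℕ) (hn : 1 ≤ n)
    (M : Matrix (Fin n) (Fin n) ℂ) (hM : IsUnit M)
    (e : Fin n → ℤ) (v w : Fin n → ℂ)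
    (hvw : ∀ a, v a * w a = 1)
    (g : Matrix (Fin n) (Fin n) ℂ)
    (hg : g = Matrix.diagonal fun a => (v a)⁻¹)
    (Mt : Matrix (Fin n) (Fin n) ℂ) (hMt : Mt = g * M * g⁻¹)
    (T : Matrix (Fin n × Fin n) (Fin n × Fin n) ℂ)
    (hT : T = ∑ a : Fin n, ∑ b : Fin n,
      (v a * w b) • ((Matrix.single a b (1 : ℂ)) ⊗ₖ (M ^ (e a - e b)))) :
    (g ⊗ₖ g) * T * (g ⊗ₖ g)⁻¹ =
      ∑ a : Fin n, ∑ b : Fin n,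
        (Matrix.single a b (1 : ℂ)) ⊗ₖ (Mt ^ (e a - e b)) := by
  have hv : ∀ a, v a ≠ 0 := by
    intro a h
    simpa [h] using hvw a
  have hgdet : IsUnit g.det := by
    rw [hg, Matrix.det_diagonal]
    exact isUnit_iff_ne_zero.mpr (Finset.prod_ne_zero_iff.mpr
      fun a _ => inv_ne_zero (hv a))
  have hMdet : IsUnit M.det := (Matrix.isUnit_iff_isUnit_det M).mp hM
  have hginv : g⁻¹ = Matrix.diagonal v := by
    apply Matrix.inv_eq_left_inv
    rw [hg, Matrix.diagonal_mul_diagonal]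
    convert Matrix.diagonal_one using 2
    ext a
    exact mul_inv_cancel₀ (hv a)
  have hpow : ∀ k : ℤ, g * M ^ k * g⁻¹ = Mt ^ k := by
    intro k
    rw [hMt]
    exact matConj_zpow n g M hgdet hMdet k
  rw [Matrix.inv_kronecker, hT, Finset.mul_sum, Finset.sum_mul]
  refine Finset.sum_congr rfl fun a _ => ?_
  rw [Finset.mul_sum, Finset.sum_mul]
  refine Finset.sum_congr rfl fun b _ => ?_
  rw [Matrix.mul_smul, Matrix.smul_mul, ← Matrix.mul_kronecker_mul,
    ← Matrix.mul_kronecker_mul, hpow]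
  have hE : g * Matrix.single a b (1:ℂ) * g⁻¹
      = ((v a)⁻¹ * v b) • Matrix.single a b 1 := by
    rw [hginv, hg, diag_conj_stdBasis]
  rw [hE, Matrix.smul_kronecker, smul_smul]
  have h1 : v a * w b * ((v a)⁻¹ * v b) = 1 := by
    calc v a * w b * ((v a)⁻¹ * v b) = (v a * (v a)⁻¹) * (v b * w b) := by ring
    _ = 1 := by rw [mul_inv_cancel₀ (hv a), hvw b, one_mul]
  rw [h1, one_smul]
end

section
/- Baxterization of Hecke representations: let q ∈ ℂ with q ≠ 0, let n ≥ 1, and let Ř be an invertible n²×n² complex matrix such that (i) the braid relation (Ř ⊗ I_n)(I_n ⊗ Ř)(Ř ⊗ I_n) = (I_n ⊗ Ř)(Ř ⊗ I_n)(I_n ⊗ Ř) holds on ℂⁿ⊗ℂⁿ⊗ℂⁿ, and (ii) the Hecke condition (Ř − q·I)(Ř + q^{−1}·I) = 0 holds. For nonzero u ∈ ℂ define Ř(u) = u·Ř − u^{−1}·Ř^{−1}, and set Ř₁₂(x) = Ř(x) ⊗ I_n, Ř₂₃(x) = I_n ⊗ Ř(x). Then for all nonzero u, w ∈ ℂ: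 Ř₁₂(u)·Ř₂₃(uw)·Ř₁₂(w) = Ř₂₃(w)·Ř₁₂(uw)·Ř₂₃(u). -/
open Matrix Kronecker

lemma baxterization_aux {N : Type*} [Fintype N] [DecidableEq N]
    (A B : Matrix N N ℂ) (lam a b c d m m' : ℂ)
    (hb : A*B*A = B*A*B) (hA : A*A = lam•A + 1) (hB : B*B = lam•B + 1)
    (h1 : a*c*m'*lam + a*d*m' + b*c*m' = b*d*m) :
    (a•A+b•1)*(m•B+m'•1)*(c•A+d•1) = (c•B+d•1)*(m•A+m'•1)*(a•B+b•1) := by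
  have e1 : (a•A+b•1)*(m•B+m'•1)*(c•A+d•1)
      = (a*m*c)•(A*B*A) + (a*d*m)•(A*B) + (b*c*m)•(B*A) + (a*c*m')•(A*A)
        + (a*d*m'+b*c*m')•A + (b*d*m)•B + (b*d*m')•1 := by
    simp only [add_mul, mul_add, smul_mul_assoc, mul_smul_comm, smul_smul, one_mul, mul_one,
      Matrix.mul_assoc]
    module
  have e2 : (c•B+d•1)*(m•A+m'•1)*(a•B+b•1)
      = (c*m*a)•(B*A*B) + (a*d*m)•(A*B) + (b*c*m)•(B*A) + (a*c*m')•(B*B)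
        + (a*d*m'+b*c*m')•B + (b*d*m)•A + (b*d*m')•1 := by
    simp only [add_mul, mul_add, smul_mul_assoc, mul_smul_comm, smul_smul, one_mul, mul_one,
      Matrix.mul_assoc]
    module
  rw [e1, e2, hb, hA, hB]
  match_scalars <;>
    first | ring1 | linear_combination h1 | linear_combination -h1 |
      linear_combination 2*h1 | linear_combination -2*h1

/-- Baxterization of Hecke representations. If the invertible
`n²×n²` matrix `Ř` satisfies the braid relation and the Hecke condition
`(Ř − q·I)(Ř + q⁻¹·I) = 0`, then `Ř(u) = u Ř − u⁻¹ Ř⁻¹` satisfies the Yang–Baxter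
equation with multiplicative spectral parameters:
`Ř₁₂(u) Ř₂₃(uw) Ř₁₂(w) = Ř₂₃(w) Ř₁₂(uw) Ř₂₃(u)` for all nonzero `u, w`. -/
theorem baxterization_hecke (n : ℕ) (hn : 1 ≤ n) (q : ℂ) (hq : q ≠ 0)
    (R : Matrix (Fin n × Fin n) (Fin n × Fin n) ℂ) (hR : IsUnit R)
    (lift12 lift23 : Matrix (Fin n × Fin n) (Fin n × Fin n) ℂ →
      Matrix (Fin n × Fin n × Fin n) (Fin n × Fin n × Fin n) ℂ)
    (hlift12 : ∀ X, lift12 X = Matrix.reindex (Equiv.prodAssoc (Fin n) (Fin n) (Fin n))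
      (Equiv.prodAssoc (Fin n) (Fin n) (Fin n)) (X ⊗ₖ (1 : Matrix (Fin n) (Fin n) ℂ)))
    (hlift23 : ∀ X, lift23 X = (1 : Matrix (Fin n) (Fin n) ℂ) ⊗ₖ X)
    (hbraid : lift12 R * lift23 R * lift12 R = lift23 R * lift12 R * lift23 R)
    (hHecke : (R - q • (1 : Matrix (Fin n × Fin n) (Fin n × Fin n) ℂ)) *
      (R + q⁻¹ • (1 : Matrix (Fin n × Fin n) (Fin n × Fin n) ℂ)) = 0)
    (Rx : ℂ → Matrix (Fin n × Fin n) (Fin n × Fin n) ℂ)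
    (hRx : ∀ u : ℂ, Rx u = u • R - u⁻¹ • R⁻¹) :
    ∀ u w : ℂ, u ≠ 0 → w ≠ 0 →
      lift12 (Rx u) * lift23 (Rx (u * w)) * lift12 (Rx w) =
        lift23 (Rx w) * lift12 (Rx (u * w)) * lift23 (Rx u) := by
  intro u w hu hw
  set lam : ℂ := q - q⁻¹ with hlam
  -- Hecke gives R*R = lam•R + 1
  have hRR : R * R = lam • R + 1 := by
    have h2 : R * R - (lam • R + 1) =
        (R - q • (1 : Matrix (Fin n × Fin n) (Fin n × Fin n) ℂ)) *
          (R + q⁻¹ • (1 : Matrix (Fin n × Fin n) (Fin n × Fin n) ℂ)) := by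
      simp only [sub_mul, mul_add, smul_mul_assoc, mul_smul_comm, smul_smul, mul_one, one_mul,
        mul_inv_cancel₀ hq, hlam]
      match_scalars <;> (field_simp; try ring)
    exact sub_eq_zero.mp (h2.trans hHecke)
  -- hence R⁻¹ = R - lam•1
  have hRinv : R⁻¹ = R - lam • 1 := by
    apply Matrix.inv_eq_right_inv
    rw [mul_sub, hRR, mul_smul_comm, mul_one]
    module
  -- closed form for Rx
  have hRxe : ∀ v : ℂ, Rx v = (v - v⁻¹) • R + (v⁻¹ * lam) • 1 := by
    intro v
    rw [hRx, hRinv]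
    module
  set A := lift12 R with hA'
  set B := lift23 R with hB'
  -- lifts are linear
  have h12lin : ∀ (x y : ℂ), lift12 (x • R + y • 1) = x • A + y • 1 := by
    intro x y
    simp only [hlift12, Matrix.add_kronecker, Matrix.smul_kronecker,
      Matrix.one_kronecker_one, Matrix.reindex_apply, Matrix.submatrix_add,
      Matrix.submatrix_smul, Matrix.submatrix_one_equiv, Pi.add_apply, Pi.smul_apply]
    rw [hA', hlift12, Matrix.reindex_apply]
  have h23lin : ∀ (x y : ℂ), lift23 (x • R + y • 1) = x • B + y • 1 := by
    intro x y
    simp only [hlift23, Matrix.kronecker_add, Matrix.kronecker_smul,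
      Matrix.one_kronecker_one]
    rw [hB', hlift23]
  -- lifts are multiplicative
  have h12mul : ∀ X Y, lift12 X * lift12 Y = lift12 (X * Y) := by
    intro X Y
    simp only [hlift12, Matrix.reindex_apply, Matrix.submatrix_mul_equiv,
      ← Matrix.mul_kronecker_mul, one_mul]
  have h23mul : ∀ X Y, lift23 X * lift23 Y = lift23 (X * Y) := by
    intro X Y
    simp only [hlift23, ← Matrix.mul_kronecker_mul, one_mul]
  -- Hecke relation for the lifts
  have hAA : A * A = lam • A + 1 := by
    have h := h12lin lam 1
    rw [one_smul] at h
    rw [hA', h12mul, hRR, h, one_smul, hA']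
  have hBB : B * B = lam • B + 1 := by
    have h := h23lin lam 1
    rw [one_smul] at h
    rw [hB', h23mul, hRR, h, one_smul, hB']
  -- scalar identity
  have huw : u * w ≠ 0 := mul_ne_zero hu hw
  have h1 : (u - u⁻¹) * (w - w⁻¹) * ((u*w)⁻¹ * lam) * lam
      + (u - u⁻¹) * (w⁻¹ * lam) * ((u*w)⁻¹ * lam)
      + (u⁻¹ * lam) * (w - w⁻¹) * ((u*w)⁻¹ * lam)
      = (u⁻¹ * lam) * (w⁻¹ * lam) * (u * w - (u*w)⁻¹) := by
    field_simp
    ring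
  rw [hRxe u, hRxe w, hRxe (u*w), h12lin, h12lin, h12lin, h23lin, h23lin, h23lin]
  exact baxterization_aux A B lam (u - u⁻¹) (u⁻¹ * lam) (w - w⁻¹) (w⁻¹ * lam)
    (u * w - (u*w)⁻¹) ((u*w)⁻¹ * lam) hbraid hAA hBB h1
end
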